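/- arXiv:2501.15834 — 2 statements merged into one kernel-verified Lean document; each statement's English description precedes it below -/
import Mathlib

section
/- Let H = (N, {≻_a}) be a housing market with strict partial order preferences, X an allocation, and define prices p : N → {1,…,n} (n = |N|). X is in the strong core of H if and only if there exists such a price function p with p(i) < p(j) for every arc (i,j) ∈ E_{[≻X]} and p(i) ≤ p(j) for every arc (i,j) ∈ E_{[⪰X]}. -/
/-- A housing market: each agent `a` has a strict partial order `pref a`
(`pref a b c` means agent `a` strictly prefers house `b` to house `c`). -/
structure Market (N : Type) where
  pref : N → N → N → Prop
  irrefl : ∀ a b, ¬ pref a b b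
  asymm : ∀ a b c, pref a b c → ¬ pref a c b
  trans : ∀ a b c d, pref a b c → pref a c d → pref a b d

namespace Market

variable {N : Type}

/-- `b` is acceptable to `a`: `b ⪰_a a`, i.e. not `a ≻_a b`. -/
def acceptable (H : Market N) (a b : N) : Prop := ¬ H.pref a a b

/-- Arcs of the underlying digraph `D^H`. -/
def E (H : Market N) : Set (N × N) := {e | H.acceptable e.1 e.2}

/-- Undominated arcs of `D^H`. -/
def undominated (H : Market N) : Set (N × N) :=
  {e | e ∈ H.E ∧ ∀ b', H.acceptable e.1 b' → ¬ H.pref e.1 b' e.2}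

/-- A full allocation, given as a function assigning each agent its house. -/
def IsAllocation (H : Market N) (X : N → N) : Prop :=
  Function.Bijective X ∧ ∀ a, H.acceptable a (X a)

/-- A cycle of length `k ≥ 1` with all arcs in the arc set `A`. -/
def IsCycleIn (A : Set (N × N)) (k : ℕ) (c : ZMod k → N) : Prop :=
  0 < k ∧ Function.Injective c ∧ ∀ i, (c i, c (i + 1)) ∈ A

/-- `E_{[⪰X]}`: arcs `(a,b)` with `b ⪰_a X(a)`. -/
def weakImprove (H : Market N) (X : N → N) : Set (N × N) :=
  {e | e ∈ H.E ∧ ¬ H.pref e.1 (X e.1) e.2}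

/-- `E_{[≻X]}`: arcs `(a,b)` with `b ≻_a X(a)`. -/
def strictImprove (H : Market N) (X : N → N) : Set (N × N) :=
  {e | e ∈ H.E ∧ H.pref e.1 e.2 (X e.1)}

/-- A (weakly) blocking cycle for `X`. -/
def Blocks (H : Market N) (X : N → N) (k : ℕ) (c : ZMod k → N) : Prop :=
  IsCycleIn H.E k c ∧
  (∀ i, ¬ H.pref (c i) (X (c i)) (c (i + 1))) ∧
  (∃ i, H.pref (c i) (c (i + 1)) (X (c i)))

/-- The strong core: allocations admitting no blocking cycle. -/
def InStrongCore (H : Market N) (X : N → N) : Prop :=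
  H.IsAllocation X ∧ ¬ ∃ k c, H.Blocks X k c

/-- A strictly blocking cycle for `X`. -/
def StrictBlocks (H : Market N) (X : N → N) (k : ℕ) (c : ZMod k → N) : Prop :=
  IsCycleIn H.E k c ∧ ∀ i, H.pref (c i) (c (i + 1)) (X (c i))

/-- The core: allocations admitting no strictly blocking cycle. -/
def InCore (H : Market N) (X : N → N) : Prop :=
  H.IsAllocation X ∧ ¬ ∃ k c, H.StrictBlocks X k c

/-- An allocation of the submarket `H|_S`, given as a set of arcs among agents of `S`. -/
def IsAllocationOn (H : Market N) (S : Set N) (X : Set (N × N)) : Prop :=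
  X ⊆ H.E ∧ (∀ e ∈ X, e.1 ∈ S ∧ e.2 ∈ S) ∧
  (∀ a ∈ S, ∃! b, (a, b) ∈ X) ∧ (∀ b ∈ S, ∃! a, (a, b) ∈ X)

/-- A blocking cycle for the arc set `X` within the submarket `H|_S`. -/
def BlocksOn (H : Market N) (S : Set N) (X : Set (N × N)) (k : ℕ) (c : ZMod k → N) : Prop :=
  IsCycleIn H.E k c ∧ (∀ i, c i ∈ S) ∧
  (∀ i b, (c i, b) ∈ X → ¬ H.pref (c i) b (c (i + 1))) ∧
  (∃ i b, (c i, b) ∈ X ∧ H.pref (c i) (c (i + 1)) b)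

/-- Membership in the strong core of the submarket `H|_S`. -/
def InStrongCoreOn (H : Market N) (S : Set N) (X : Set (N × N)) : Prop :=
  H.IsAllocationOn S X ∧ ¬ ∃ k c, H.BlocksOn S X k c

end Market

/-- The arcs of the allocation `X` whose tails lie in `S`. -/
def graphRestrict {N : Type} (X : N → N) (S : Set N) : Set (N × N) :=
  {e | e.1 ∈ S ∧ e.2 = X e.1}

/-- Reachability in the digraph given by arc set `A`. -/
def reach {N : Type} (A : Set (N × N)) : N → N → Prop :=
  Relation.ReflTransGen (fun u v => (u, v) ∈ A)

/-- A strongly connected component of the digraph given by arc set `A`. -/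
def IsSCC {N : Type} (A : Set (N × N)) (S : Set N) : Prop :=
  S.Nonempty ∧ (∀ u ∈ S, ∀ v ∈ S, reach A u v) ∧
  (∀ u ∈ S, ∀ v, reach A u v → reach A v u → v ∈ S)

/-- An absorbing set: a strongly connected component not left by any arc. -/
def IsAbsorbing {N : Type} (A : Set (N × N)) (S : Set N) : Prop :=
  IsSCC A S ∧ ∀ e ∈ A, e.1 ∈ S → e.2 ∈ S


lemma exists_nodup_chain {N : Type} {r : N → N → Prop} {b a : N}
    (h : Relation.ReflTransGen r b a) :
    ∃ l : List N, l ≠ [] ∧ l.Chain' r ∧ l.head? = some b ∧ l.getLast? = some a ∧ l.Nodup := by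
  induction h using Relation.ReflTransGen.head_induction_on with
  | refl => exact ⟨[a], by simp, List.isChain_singleton a, by simp⟩
  | head hbc _ ih =>
    rename_i b c _
    obtain ⟨l, hne, hch, hhd, hlast, hnd⟩ := ih
    by_cases hb : b ∈ l
    · obtain ⟨s, t, rfl⟩ := List.append_of_mem hb
      refine ⟨b :: t, by simp, hch.suffix ⟨s, rfl⟩, rfl, ?_, ?_⟩
      · rwa [List.getLast?_append_of_ne_nil _ (by simp)] at hlast
      · exact (List.sublist_append_right s _).nodup hnd
    · obtain ⟨c', t, rfl⟩ : ∃ c' t, l = c' :: t := by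
        cases l with
        | nil => exact absurd rfl hne
        | cons x t => exact ⟨x, t, rfl⟩
      have hc : c' = c := by simpa using hhd
      subst hc
      exact ⟨b :: c' :: t, by simp, List.isChain_cons_cons.2 ⟨hbc, hch⟩, rfl,
        by rwa [List.getLast?_cons_cons], by simp [hnd, hb]⟩

namespace Market
variable {N : Type}

lemma strict_sub_weak (H : Market N) (X : N → N) :
    H.strictImprove X ⊆ H.weakImprove X :=
  fun e he => ⟨he.1, H.asymm _ _ _ he.2⟩

lemma blocks_of_reach (H : Market N) (X : N → N) {a b : N}
    (hs : (a, b) ∈ H.strictImprove X)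
    (hr : reach (H.weakImprove X) b a) :
    ∃ k c, H.Blocks X k c := by
  obtain ⟨l, hne, hch, hhd, hlast, hnd⟩ := exists_nodup_chain hr
  set k := l.length with hk
  have hkpos : 0 < k := List.length_pos_iff.2 hne
  haveI : NeZero k := ⟨hkpos.ne'⟩
  set c : ZMod k → N := fun i => l.get ⟨i.val, ZMod.val_lt i⟩ with hc
  have hval : ∀ i : ZMod k, (i + 1).val = (i.val + 1) % k := by
    intro i
    rw [ZMod.val_add, ZMod.val_one_eq_one_mod]
    conv_rhs => rw [Nat.add_mod, Nat.mod_eq_of_lt (ZMod.val_lt i)]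
  have h0 : l.get ⟨0, hkpos⟩ = b := by
    obtain ⟨x, t, rfl⟩ : ∃ x t, l = x :: t := by
      cases l with
      | nil => exact absurd rfl hne
      | cons x t => exact ⟨x, t, rfl⟩
    simpa using hhd
  have hlasta : l.get ⟨k - 1, by omega⟩ = a := by
    have h1 := List.getLast?_eq_getLast_of_ne_nil hne
    rw [hlast] at h1
    have h2 : l.getLast hne = a := by simpa using h1.symm
    rw [← h2, List.getLast_eq_getElem]
    simp [List.get_eq_getElem, hk]
  have harc : ∀ i : ZMod k, (c i, c (i + 1)) ∈ H.weakImprove X := by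
    intro i
    by_cases hi : i.val + 1 < k
    · have hv : (i + 1).val = i.val + 1 := by
        rw [hval i, Nat.mod_eq_of_lt hi]
      have := List.isChain_iff_getElem.1 hch i.val (by omega)
      simp only [hc, hv]
      convert this using 2 <;> simp [List.get_eq_getElem]
    · have hik : i.val = k - 1 := by have := ZMod.val_lt i; omega
      have hv : (i + 1).val = 0 := by
        rw [hval i, hik, Nat.sub_add_cancel hkpos, Nat.mod_self]
      have hca : c i = a := by simp only [hc]; rw [← hlasta]; congr 1; simp [hik]
      have hcb : c (i + 1) = b := by simp only [hc]; rw [← h0]; congr 1; simp [hv]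
      rw [hca, hcb]
      exact H.strict_sub_weak X hs
  refine ⟨k, c, ⟨hkpos, ?_, fun i => (harc i).1⟩, fun i => (harc i).2, ?_⟩
  · intro i j hij
    apply ZMod.val_injective k
    have : (⟨i.val, ZMod.val_lt i⟩ : Fin l.length) = ⟨j.val, ZMod.val_lt j⟩ := List.nodup_iff_injective_get.1 hnd hij
    simpa using congrArg Fin.val this
  · refine ⟨((k - 1 : ℕ) : ZMod k), ?_⟩
    have hvk : (((k - 1 : ℕ) : ZMod k)).val = k - 1 := by
      rw [ZMod.val_natCast, Nat.mod_eq_of_lt (by omega)]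
    have hv : (((k - 1 : ℕ) : ZMod k) + 1).val = 0 := by
      rw [hval, hvk, Nat.sub_add_cancel hkpos, Nat.mod_self]
    have hca : c ((k - 1 : ℕ) : ZMod k) = a := by
      simp only [hc]; rw [← hlasta]; congr 1; simp [hvk]
    have hcb : c (((k - 1 : ℕ) : ZMod k) + 1) = b := by
      simp only [hc]; rw [← h0]; congr 1; simp [hv]
    rw [hca, hcb]
    exact hs.2

end Market

theorem stmt13 {N : Type} [Fintype N] (H : Market N) (X : N → N)
    (hX : H.IsAllocation X) :
    H.InStrongCore X ↔
      ∃ p : N → ℕ, (∀ i, 1 ≤ p i ∧ p i ≤ Fintype.card N) ∧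
        (∀ e ∈ H.strictImprove X, p e.1 < p e.2) ∧
        (∀ e ∈ H.weakImprove X, p e.1 ≤ p e.2) := by
  constructor
  · intro hcore
    set A := H.weakImprove X with hA
    refine ⟨fun v => {u | reach A u v}.ncard, ?_, ?_, ?_⟩
    · intro v
      refine ⟨(Set.ncard_pos (Set.toFinite _)).2 ⟨v, Relation.ReflTransGen.refl⟩, ?_⟩
      calc {u | reach A u v}.ncard ≤ (Set.univ : Set N).ncard :=
            Set.ncard_le_ncard (Set.subset_univ _) Set.finite_univ
        _ = Fintype.card N := by rw [Set.ncard_univ, Nat.card_eq_fintype_card]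
    · rintro ⟨a, b⟩ he
      refine Set.ncard_lt_ncard ⟨?_, ?_⟩ (Set.toFinite _)
      · intro u hu
        exact Relation.ReflTransGen.tail hu (H.strict_sub_weak X he)
      · intro hsub
        have hb : b ∈ {u | reach A u b} := Relation.ReflTransGen.refl
        exact hcore.2 (H.blocks_of_reach X he (hsub hb))
    · rintro ⟨a, b⟩ he
      exact Set.ncard_le_ncard (fun u hu => Relation.ReflTransGen.tail hu he)
        (Set.toFinite _)
  · rintro ⟨p, -, hstrict, hweak⟩
    refine ⟨hX, ?_⟩
    rintro ⟨k, c, ⟨hkpos, hinj, harcE⟩, hwk, i0, hst⟩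
    have hle : ∀ i : ZMod k, p (c i) ≤ p (c (i + 1)) :=
      fun i => hweak _ ⟨harcE i, hwk i⟩
    have hlt : p (c i0) < p (c (i0 + 1)) := hstrict _ ⟨harcE i0, hst⟩
    have key : ∀ m : ℕ, p (c i0) < p (c (i0 + 1 + (m : ZMod k))) := by
      intro m
      induction m with
      | zero => simpa using hlt
      | succ m ih =>
        have he : (i0 + 1 + ((m + 1 : ℕ) : ZMod k)) = (i0 + 1 + (m : ZMod k)) + 1 := by
          push_cast; ring
        rw [he]
        exact ih.trans_le (hle _)
    have h2 := key (k - 1)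
    have heq : (i0 + 1 + ((k - 1 : ℕ) : ZMod k)) = i0 := by
      have h3 : ((1 + (k - 1) : ℕ) : ZMod k) = 0 := by
        have : 1 + (k - 1) = k := by omega
        rw [this, ZMod.natCast_self]
      calc i0 + 1 + ((k - 1 : ℕ) : ZMod k) = i0 + ((1 + (k - 1) : ℕ) : ZMod k) := by
            push_cast; ring
        _ = i0 := by rw [h3, add_zero]
    rw [heq] at h2
    exact lt_irrefl _ h2
end

section
/- There exists a housing market H with strict partial order preferences over five agents {a,b,c,d₁,d₂} whose strong core contains exactly two allocations: {(a,b),(b,c),(c,a),(d₁,d₂),(d₂,d₁)} and {(a,c),(c,b),(b,a),(d₁,d₂),(d₂,d₁)}. -/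
/-- Acceptability table: 0=a,1=b,2=c,3=d1,4=d2. -/
def accB (x y : Fin 5) : Bool :=
  (![([0,1,2,3] : List (Fin 5)), [0,1,2,4], [0,1,2], [2,3,4], [3,4]] x).contains y

/-- Preference table: acceptable > unacceptable; acceptable non-self > self;
plus c ≻_a d1 and c ≻_b d2. -/
def prefB (x y z : Fin 5) : Bool :=
  (accB x y && !(accB x z)) || (accB x y && !(y == x) && (z == x)) ||
  (x == 0 && y == 2 && z == 3) || (x == 1 && y == 2 && z == 4)

def M5 : Market (Fin 5) where
  pref x y z := prefB x y z = true
  irrefl := by decide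
  asymm := by decide
  trans := by decide

instance (x y z : Fin 5) : Decidable (M5.pref x y z) :=
  inferInstanceAs (Decidable (prefB x y z = true))

instance (a b : Fin 5) : Decidable (M5.acceptable a b) :=
  inferInstanceAs (Decidable (¬ prefB a a b = true))

instance (e : Fin 5 × Fin 5) : Decidable (e ∈ M5.E) :=
  inferInstanceAs (Decidable (M5.acceptable e.1 e.2))

instance (X : Fin 5 → Fin 5) (k : ℕ) [NeZero k] (c : ZMod k → Fin 5) :
    Decidable (M5.Blocks X k c) :=
  inferInstanceAs (Decidable
    ((0 < k ∧ Function.Injective c ∧ ∀ i, (c i, c (i + 1)) ∈ M5.E) ∧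
      (∀ i, ¬ M5.pref (c i) (X (c i)) (c (i + 1))) ∧
      (∃ i, M5.pref (c i) (c (i + 1)) (X (c i)))))

theorem stmt16 : ∃ H : Market (Fin 5),
    ∀ X : Fin 5 → Fin 5,
      H.InStrongCore X ↔ (X = ![1, 2, 0, 4, 3] ∨ X = ![2, 0, 1, 4, 3]) := by
  refine ⟨M5, fun X => ⟨?_, ?_⟩⟩
  · rintro ⟨⟨⟨hinj, _⟩, hacc⟩, hnb⟩
    have m0 : ∀ z : Fin 5, M5.acceptable 0 z → z = 0 ∨ z = 1 ∨ z = 2 ∨ z = 3 := by decide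
    have m1 : ∀ z : Fin 5, M5.acceptable 1 z → z = 0 ∨ z = 1 ∨ z = 2 ∨ z = 4 := by decide
    have m2 : ∀ z : Fin 5, M5.acceptable 2 z → z = 0 ∨ z = 1 ∨ z = 2 := by decide
    have m3 : ∀ z : Fin 5, M5.acceptable 3 z → z = 2 ∨ z = 3 ∨ z = 4 := by decide
    have m4 : ∀ z : Fin 5, M5.acceptable 4 z → z = 3 ∨ z = 4 := by decide
    rcases m0 (X 0) (hacc 0) with h0|h0|h0|h0 <;>
      rcases m1 (X 1) (hacc 1) with h1|h1|h1|h1 <;>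
      rcases m2 (X 2) (hacc 2) with h2|h2|h2 <;>
      rcases m3 (X 3) (hacc 3) with h3|h3|h3 <;>
      rcases m4 (X 4) (hacc 4) with h4|h4 <;>
      first
      | exact absurd (hinj (h0.trans h1.symm)) (by decide)
      | exact absurd (hinj (h0.trans h2.symm)) (by decide)
      | exact absurd (hinj (h0.trans h3.symm)) (by decide)
      | exact absurd (hinj (h0.trans h4.symm)) (by decide)
      | exact absurd (hinj (h1.trans h2.symm)) (by decide)
      | exact absurd (hinj (h1.trans h3.symm)) (by decide)
      | exact absurd (hinj (h1.trans h4.symm)) (by decide)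
      | exact absurd (hinj (h2.trans h3.symm)) (by decide)
      | exact absurd (hinj (h2.trans h4.symm)) (by decide)
      | exact absurd (hinj (h3.trans h4.symm)) (by decide)
      | · have hX : X = ![X 0, X 1, X 2, X 3, X 4] := by
            funext i; fin_cases i <;> rfl
          rw [h0, h1, h2, h3, h4] at hX
          subst hX
          first
          | exact Or.inl rfl
          | exact Or.inr rfl
          | exact absurd ⟨2, fun i : ZMod 2 => ![3, 4] i, by decide⟩ hnb
          | exact absurd ⟨3, fun i : ZMod 3 => ![0, 1, 2] i, by decide⟩ hnb
  · rintro (rfl | rfl) <;>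
      refine ⟨⟨by decide, by decide⟩, ?_⟩ <;>
      · rintro ⟨k, c, _, _, i, hstr⟩
        revert hstr
        first
        | exact (by decide : ∀ x y : Fin 5, ¬ M5.pref x y (![1,2,0,4,3] x)) (c i) (c (i+1))
        | exact (by decide : ∀ x y : Fin 5, ¬ M5.pref x y (![2,0,1,4,3] x)) (c i) (c (i+1))
        | decide
end
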